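/- Let q ∈ ℂ with q ≠ 0 and q^m ≠ 1 for every positive integer m. Let A₁₁, A₁₂, A₂₁, A₂₂ and A'₁₁, A'₁₂, A'₂₁, A'₂₂ be two representations of GL_q(2,ℂ) by 4×4 complex matrices whose 2×2 block matrices M = (A_ij) and M' = (A'_ij) over M₄(ℂ) are invertible, and let a_ij · v := Σ_k M_{ik} v (M⁻¹)_{kj} and a_ij * v := Σ_k M'_{ik} v (M'⁻¹)_{kj} be the corresponding inner actions on M₄(ℂ). Then the two actions are equivalent, i.e. there exists an invertible u ∈ M₄(ℂ) such that a_ij * (uwu⁻¹) = u(a_ij · w)u⁻¹ for all w ∈ M₄(ℂ) and all i, j ∈ {1,2}, if and only if there exist an invertible u ∈ M₄(ℂ) and nonzero complex numbers α₁, α₂ such that A'₁₁ = uA₁₁u⁻¹·α₁, A'₂₁ = uA₂₁u⁻¹·α₁, A'₁₂ = uA₁₂u⁻¹·α₂ and A'₂₂ = uA₂₂u⁻¹·α₂. -/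

import Mathlib

/-- A representation of the algebra `GL_q(2,ℂ)` by `n×n` complex matrices:
the six defining relations together with invertibility of the quantum
determinant `A₁₁A₂₂ − qA₁₂A₂₁`. -/
def IsGLqRep {n : ℕ} (q : ℂ) (A₁₁ A₁₂ A₂₁ A₂₂ : Matrix (Fin n) (Fin n) ℂ) : Prop :=
  A₁₁ * A₁₂ = q • (A₁₂ * A₁₁) ∧
  A₁₁ * A₂₁ = q • (A₂₁ * A₁₁) ∧
  A₁₂ * A₂₂ = q • (A₂₂ * A₁₂) ∧
  A₂₁ * A₂₂ = q • (A₂₂ * A₂₁) ∧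
  A₁₂ * A₂₁ = A₂₁ * A₁₂ ∧
  A₁₁ * A₂₂ - A₂₂ * A₁₁ = (q - q⁻¹) • (A₁₂ * A₂₁) ∧
  IsUnit (A₁₁ * A₂₂ - q • (A₁₂ * A₂₁))

abbrev R4 := Matrix (Fin 4) (Fin 4) ℂ
abbrev T2 := Matrix (Fin 2) (Fin 2) R4

lemma central_scalar (x : R4) (h : ∀ w : R4, x * w = w * x) : ∃ c : ℂ, x = c • 1 := by
  obtain ⟨c, hc⟩ := Matrix.mem_range_scalar_of_commute_single
    (M := x) (fun i j _ => (h _).symm)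
  exact ⟨c, by rw [← hc]; ext i j; simp [Matrix.scalar_apply, Matrix.smul_apply,
    Matrix.one_apply, Matrix.diagonal_apply, mul_comm]⟩

lemma unit_ne_zero {x : R4} (h : IsUnit x) : x ≠ 0 := by
  rintro rfl
  obtain ⟨u, hu⟩ := h
  have := u.mul_inv
  rw [hu, zero_mul] at this
  exact zero_ne_one this

lemma smul_unit_zero {x : R4} {c : ℂ} (h : IsUnit x) (hc : c • x = 0) : c = 0 := by
  by_contra hne
  exact unit_ne_zero h ((smul_eq_zero.mp hc).resolve_left hne)

lemma glq_ab (q : ℂ) (hq0 : q ≠ 0) (hq1 : q ≠ 1)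
    {A₁₁ A₁₂ A₂₁ A₂₂ : R4} (hrep : IsGLqRep q A₁₁ A₁₂ A₂₁ A₂₂)
    (a b : ℂ)
    (h : (a•A₁₁+b•A₁₂) * (a•A₂₁+b•A₂₂) = q • ((a•A₂₁+b•A₂₂) * (a•A₁₁+b•A₁₂))) :
    a * b = 0 := by
  obtain ⟨r1, r2, r3, r4, r5, r6, hD⟩ := hrep
  have h6 : A₁₁ * A₂₂ = A₂₂ * A₁₁ + (q - q⁻¹) • (A₁₂ * A₂₁) := by
    rw [← r6]; abel
  have key : (a*b*(1-q)) • (A₁₁*A₂₂ - q•(A₁₂*A₂₁)) =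
      (a•A₁₁+b•A₁₂) * (a•A₂₁+b•A₂₂) - q • ((a•A₂₁+b•A₂₂) * (a•A₁₁+b•A₁₂)) := by
    simp only [add_mul, mul_add, smul_mul_assoc, mul_smul_comm, smul_smul, smul_add, smul_sub]
    rw [r2, r3, ← r5, h6]
    match_scalars <;> field_simp <;> ring
  have hz : (a*b*(1-q)) • (A₁₁*A₂₂ - q•(A₁₂*A₂₁)) = 0 := by
    rw [key, h, sub_self]
  have := smul_unit_zero hD hz
  rcases mul_eq_zero.mp this with h' | h'
  · exact h'
  · exact absurd (by linear_combination -h' : q = 1) hq1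

lemma glq_coeffs (q : ℂ) (hq0 : q ≠ 0) (hq1 : q ≠ 1) (hq2 : q ^ 2 ≠ 1)
    {A₁₁ A₁₂ A₂₁ A₂₂ : R4} (hrep : IsGLqRep q A₁₁ A₁₂ A₂₁ A₂₂)
    (a b c d : ℂ) (hdet : a * d - b * c ≠ 0)
    (hB : IsGLqRep q (a•A₁₁+b•A₁₂) (c•A₁₁+d•A₁₂) (a•A₂₁+b•A₂₂) (c•A₂₁+d•A₂₂)) :
    b = 0 ∧ c = 0 ∧ a ≠ 0 ∧ d ≠ 0 := by
  have hab : a * b = 0 := glq_ab q hq0 hq1 hrep a b hB.2.1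
  have hcd : c * d = 0 := glq_ab q hq0 hq1 hrep c d hB.2.2.1
  by_cases hb : b = 0
  · subst hb
    have had : a * d ≠ 0 := by intro h; apply hdet; rw [h]; ring
    have ha : a ≠ 0 := fun h => had (by rw [h, zero_mul])
    have hd : d ≠ 0 := fun h => had (by rw [h, mul_zero])
    have hc : c = 0 := by
      rcases mul_eq_zero.mp hcd with h | h
      · exact h
      · exact absurd h hd
    exact ⟨rfl, hc, ha, hd⟩
  · exfalso
    have ha : a = 0 := (mul_eq_zero.mp hab).resolve_right hb
    subst ha
    have hbc : b * c ≠ 0 := fun h => hdet (by rw [h]; ring)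
    have hc : c ≠ 0 := fun h => hbc (by rw [h, mul_zero])
    have hd : d = 0 := (mul_eq_zero.mp hcd).resolve_left hc
    subst hd
    simp only [zero_smul, zero_add, add_zero] at hB
    obtain ⟨r1, r2, r3, r4, r5, r6, hD⟩ := hrep
    obtain ⟨s1, s2, s3, s4, s5, s6, sD⟩ := hB
    have hqq : q - q⁻¹ ≠ 0 := by
      intro h
      apply hq2
      have : q = q⁻¹ := by linear_combination h
      field_simp at this
      linear_combination this
    have hcomm : A₁₁ * A₂₂ = A₂₂ * A₁₁ := by
      have : (c*b) • (A₁₁ * A₂₂) = (c*b) • (A₂₂ * A₁₁) := by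
        have := s5
        simp only [smul_mul_assoc, mul_smul_comm, smul_smul] at this
        rw [mul_comm b c] at this
        exact this
      exact smul_right_injective _ (by intro h; exact hbc (by rw [mul_comm]; exact h)) this
    have hP : A₁₂ * A₂₁ = 0 := by
      have h0 : (q - q⁻¹) • (A₁₂ * A₂₁) = 0 := by rw [← r6, hcomm, sub_self]
      exact (smul_eq_zero.mp h0).resolve_left hqq
    have hAD : A₁₁ * A₂₂ = 0 := by
      have h6 : (b•A₁₂) * (c•A₂₁) - (c•A₂₁) * (b•A₁₂) = (q - q⁻¹) • ((c•A₁₁) * (b•A₂₂)) := s6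
      simp only [smul_mul_assoc, mul_smul_comm, smul_smul] at h6
      rw [mul_comm c b, r5, sub_self] at h6
      rcases smul_eq_zero.mp h6.symm with h | h
      · exact absurd h (mul_ne_zero hqq hbc)
      · exact h
    apply unit_ne_zero hD
    rw [hAD, hP, smul_zero, sub_zero]

lemma sandwich (X Y : T2) (x : R4) (i j : Fin 2) :
    (X * (x • (1:T2)) * Y) i j = ∑ k, X i k * x * Y k j := by
  simp [Matrix.mul_apply, Matrix.smul_apply, Matrix.one_apply, mul_ite, ite_mul,
    Finset.sum_ite_eq, Finset.mul_sum, Finset.sum_mul, mul_assoc]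

lemma ent1 (X : T2) (w : R4) (i j : Fin 2) : (X * (w • (1:T2))) i j = X i j * w := by
  simp [Matrix.mul_apply, Matrix.smul_apply, Matrix.one_apply, mul_ite]

lemma ent2 (X : T2) (w : R4) (i j : Fin 2) : ((w • (1:T2)) * X) i j = w * X i j := by
  simp [Matrix.mul_apply, Matrix.smul_apply, Matrix.one_apply, ite_mul]

lemma smul_one_inj {c c' : ℂ} (h : c • (1:R4) = c' • (1:R4)) : c = c' := by
  have := congrFun (congrFun h 0) 0
  simpa using this

noncomputable def conjHom (u u' : R4) (hu : u * u' = 1) (hu' : u' * u = 1) : R4 →+* R4 where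
  toFun z := u' * z * u
  map_one' := by show u' * 1 * u = 1; rw [mul_one, hu']
  map_mul' x y := by
    show u' * (x * y) * u = (u' * x * u) * (u' * y * u)
    have h : u * (u' * (y * u)) = y * u := by rw [← mul_assoc, hu, one_mul]
    simp only [mul_assoc, h]
  map_zero' := by show u' * 0 * u = 0; simp
  map_add' x y := by
    show u' * (x + y) * u = u' * x * u + u' * y * u
    noncomm_ring

lemma conjHom_apply (u u' : R4) (hu hu') (z : R4) :
    conjHom u u' hu hu' z = u' * z * u := rfl

lemma conjHom_smul (u u' : R4) (hu hu') (c : ℂ) (z : R4) :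
    conjHom u u' hu hu' (c • z) = c • conjHom u u' hu hu' z := by
  simp [conjHom, smul_mul_assoc, mul_smul_comm]

lemma conj_rep (q : ℂ) (u u' : R4) (hu : u * u' = 1) (hu' : u' * u = 1)
    {X₁₁ X₁₂ X₂₁ X₂₂ : R4} (h : IsGLqRep q X₁₁ X₁₂ X₂₁ X₂₂) :
    IsGLqRep q (u' * X₁₁ * u) (u' * X₁₂ * u) (u' * X₂₁ * u) (u' * X₂₂ * u) := by
  obtain ⟨r1, r2, r3, r4, r5, r6, hD⟩ := h
  set φ := conjHom u u' hu hu' with hφdef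
  have hφ : ∀ z, u' * z * u = φ z := fun _ => rfl
  have hsm : ∀ (c : ℂ) (z : R4), φ (c • z) = c • φ z := conjHom_smul u u' hu hu'
  refine ⟨?_, ?_, ?_, ?_, ?_, ?_, ?_⟩
  · simp only [hφ, ← map_mul, r1, hsm]
  · simp only [hφ, ← map_mul, r2, hsm]
  · simp only [hφ, ← map_mul, r3, hsm]
  · simp only [hφ, ← map_mul, r4, hsm]
  · simp only [hφ, ← map_mul, r5]
  · simp only [hφ, ← map_mul, ← map_sub, r6, hsm]
  · simp only [hφ, ← map_mul, ← hsm, ← map_sub]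
    exact hD.map φ

set_option maxHeartbeats 2000000 in
theorem inner_actions_equivalent_iff (q : ℂ) (hq0 : q ≠ 0)
    (hq : ∀ m : ℕ, 0 < m → q ^ m ≠ 1)
    (A₁₁ A₁₂ A₂₁ A₂₂ A'₁₁ A'₁₂ A'₂₁ A'₂₂ : Matrix (Fin 4) (Fin 4) ℂ)
    (hrep : IsGLqRep q A₁₁ A₁₂ A₂₁ A₂₂) (hrep' : IsGLqRep q A'₁₁ A'₁₂ A'₂₁ A'₂₂)
    (N N' : Matrix (Fin 2) (Fin 2) (Matrix (Fin 4) (Fin 4) ℂ))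
    (hMN : !![A₁₁, A₁₂; A₂₁, A₂₂] * N = 1) (hNM : N * !![A₁₁, A₁₂; A₂₁, A₂₂] = 1)
    (hMN' : !![A'₁₁, A'₁₂; A'₂₁, A'₂₂] * N' = 1)
    (hNM' : N' * !![A'₁₁, A'₁₂; A'₂₁, A'₂₂] = 1) :
    (∃ u u' : Matrix (Fin 4) (Fin 4) ℂ, u * u' = 1 ∧ u' * u = 1 ∧
        ∀ (i j : Fin 2) (w : Matrix (Fin 4) (Fin 4) ℂ),
          (∑ k, !![A'₁₁, A'₁₂; A'₂₁, A'₂₂] i k * (u * w * u') * N' k j) =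
            u * (∑ k, !![A₁₁, A₁₂; A₂₁, A₂₂] i k * w * N k j) * u') ↔
    (∃ (u u' : Matrix (Fin 4) (Fin 4) ℂ) (α₁ α₂ : ℂ),
        u * u' = 1 ∧ u' * u = 1 ∧ α₁ ≠ 0 ∧ α₂ ≠ 0 ∧
        A'₁₁ = α₁ • (u * A₁₁ * u') ∧ A'₂₁ = α₁ • (u * A₂₁ * u') ∧
        A'₁₂ = α₂ • (u * A₁₂ * u') ∧ A'₂₂ = α₂ • (u * A₂₂ * u')) := by
  have hq1 : q ≠ 1 := by have := hq 1 one_pos; rwa [pow_one] at this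
  have hq2 : q ^ 2 ≠ 1 := hq 2 two_pos
  set Mb : T2 := !![A₁₁, A₁₂; A₂₁, A₂₂] with hMb
  set M'b : T2 := !![A'₁₁, A'₁₂; A'₂₁, A'₂₂] with hM'b
  constructor
  · rintro ⟨u, u', hu, hu', hact⟩
    set φ := conjHom u u' hu hu' with hφdef
    set B : T2 := φ.mapMatrix M'b with hBdef
    set C : T2 := φ.mapMatrix N' with hCdef
    have hBC : B * C = 1 := by
      rw [hBdef, hCdef, ← map_mul, hMN', map_one]
    have hCB : C * B = 1 := by
      rw [hBdef, hCdef, ← map_mul, hNM', map_one]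
    have hBij : ∀ i j, B i j = u' * M'b i j * u := by
      intro i j; rfl
    have hCij : ∀ i j, C i j = u' * N' i j * u := by
      intro i j; rfl
    have key : ∀ w : R4, B * (w • (1:T2)) * C = Mb * (w • (1:T2)) * N := by
      intro w
      refine Matrix.ext fun i j => ?_
      rw [sandwich, sandwich]
      calc ∑ k, B i k * w * C k j
          = u' * (∑ k, M'b i k * (u * w * u') * N' k j) * u := by
            rw [Finset.mul_sum, Finset.sum_mul]
            refine Finset.sum_congr rfl fun k _ => ?_
            rw [hBij, hCij]
            have h1 : u * (u' * (N' k j * u)) = N' k j * u := by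
              rw [← mul_assoc, hu, one_mul]
            simp only [mul_assoc, h1]
        _ = u' * (u * (∑ k, Mb i k * w * N k j) * u') * u := by rw [hact]
        _ = ∑ k, Mb i k * w * N k j := by
            rw [← mul_assoc, ← mul_assoc, hu', one_mul, mul_assoc, hu', mul_one]
    have hE : ∀ w : R4, (N * B) * (w • (1:T2)) = (w • (1:T2)) * (N * B) := by
      intro w
      calc (N * B) * (w • (1:T2)) = (N * B) * ((w • (1:T2)) * (C * B)) := by
            rw [hCB, mul_one]
        _ = N * (B * (w • (1:T2)) * C) * B := by noncomm_ring
        _ = N * (Mb * (w • (1:T2)) * N) * B := by rw [key w]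
        _ = (N * Mb) * ((w • (1:T2)) * (N * B)) := by noncomm_ring
        _ = (w • (1:T2)) * (N * B) := by rw [hNM, one_mul]
    have hEc : ∀ i j (w : R4), (N * B) i j * w = w * (N * B) i j := by
      intro i j w
      have := congrFun (congrFun (hE w) i) j
      rwa [ent1, ent2] at this
    choose df hdf using fun i j => central_scalar ((N * B) i j) (fun w => hEc i j w)
    -- the inverse scalar matrix
    have hEF : (N * B) * (C * Mb) = 1 := by
      calc (N * B) * (C * Mb) = N * ((B * C) * Mb) := by noncomm_ring
        _ = 1 := by rw [hBC, one_mul, hNM]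
    have hFE : (C * Mb) * (N * B) = 1 := by
      calc (C * Mb) * (N * B) = C * ((Mb * N) * B) := by noncomm_ring
        _ = 1 := by rw [hMN, one_mul, hCB]
    have hF : ∀ w : R4, (C * Mb) * (w • (1:T2)) = (w • (1:T2)) * (C * Mb) := by
      intro w
      calc (C * Mb) * (w • (1:T2))
          = (C * Mb) * ((w • (1:T2)) * ((N * B) * (C * Mb))) := by rw [hEF, mul_one]
        _ = (C * Mb) * (((w • (1:T2)) * (N * B)) * (C * Mb)) := by noncomm_ring
        _ = (C * Mb) * (((N * B) * (w • (1:T2))) * (C * Mb)) := by rw [hE w]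
        _ = ((C * Mb) * (N * B)) * ((w • (1:T2)) * (C * Mb)) := by noncomm_ring
        _ = (w • (1:T2)) * (C * Mb) := by rw [hFE, one_mul]
    have hFc : ∀ i j (w : R4), (C * Mb) i j * w = w * (C * Mb) i j := by
      intro i j w
      have := congrFun (congrFun (hF w) i) j
      rwa [ent1, ent2] at this
    choose ef hef using fun i j => central_scalar ((C * Mb) i j) (fun w => hFc i j w)
    -- scalar matrices multiply to 1
    have hscal : ∀ i j : Fin 2, (∑ k, df i k * ef k j) • (1:R4) = if i = j then 1 else 0 := by
      intro i j
      have := congrFun (congrFun hEF i) j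
      rw [Matrix.mul_apply] at this
      calc (∑ k, df i k * ef k j) • (1:R4) = ∑ k, (df i k * ef k j) • (1:R4) := by
            rw [Finset.sum_smul]
        _ = ∑ k, (N * B) i k * (C * Mb) k j := by
            refine Finset.sum_congr rfl fun k _ => ?_
            rw [hdf, hef, smul_mul_assoc, mul_smul_comm, smul_smul, one_mul]
        _ = (1:T2) i j := this
        _ = if i = j then 1 else 0 := Matrix.one_apply
    have hscal' : ∀ i j : Fin 2, (∑ k, ef i k * df k j) • (1:R4) = if i = j then 1 else 0 := by
      intro i j
      have := congrFun (congrFun hFE i) j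
      rw [Matrix.mul_apply] at this
      calc (∑ k, ef i k * df k j) • (1:R4) = ∑ k, (ef i k * df k j) • (1:R4) := by
            rw [Finset.sum_smul]
        _ = ∑ k, (C * Mb) i k * (N * B) k j := by
            refine Finset.sum_congr rfl fun k _ => ?_
            rw [hdf, hef, smul_mul_assoc, mul_smul_comm, smul_smul, one_mul]
        _ = (1:T2) i j := this
        _ = if i = j then 1 else 0 := Matrix.one_apply
    -- determinant of df is nonzero
    have hdm : (Matrix.of df : Matrix (Fin 2) (Fin 2) ℂ) * (Matrix.of ef) = 1 := by
      refine Matrix.ext fun i j => ?_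
      rw [Matrix.mul_apply, Matrix.one_apply]
      simp only [Matrix.of_apply]
      apply smul_one_inj
      rw [hscal i j]
      split <;> simp
    have hdet : df 0 0 * df 1 1 - df 0 1 * df 1 0 ≠ 0 := by
      have hdet1 := congrArg Matrix.det hdm
      rw [Matrix.det_mul, Matrix.det_one, Matrix.det_fin_two] at hdet1
      simp only [Matrix.of_apply] at hdet1
      intro h
      rw [h, zero_mul] at hdet1
      exact zero_ne_one hdet1
    -- express B entries
    have hBME : B = Mb * (N * B) := by rw [← mul_assoc, hMN, one_mul]
    have hBe : ∀ i j, B i j = df 0 j • Mb i 0 + df 1 j • Mb i 1 := by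
      intro i j
      conv_lhs => rw [hBME]
      rw [Matrix.mul_apply, Fin.sum_univ_two, hdf, hdf, mul_smul_comm, mul_smul_comm,
        mul_one, mul_one]
    set a := df 0 0 with hadef
    set b := df 1 0 with hbdef
    set c := df 0 1 with hcdef
    set d := df 1 1 with hddef
    have e00 : u' * A'₁₁ * u = a • A₁₁ + b • A₁₂ := by
      have := hBe 0 0; rw [hBij] at this; exact this
    have e01 : u' * A'₁₂ * u = c • A₁₁ + d • A₁₂ := by
      have := hBe 0 1; rw [hBij] at this; exact this
    have e10 : u' * A'₂₁ * u = a • A₂₁ + b • A₂₂ := by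
      have := hBe 1 0; rw [hBij] at this; exact this
    have e11 : u' * A'₂₂ * u = c • A₂₁ + d • A₂₂ := by
      have := hBe 1 1; rw [hBij] at this; exact this
    have hconj : IsGLqRep q (u' * A'₁₁ * u) (u' * A'₁₂ * u) (u' * A'₂₁ * u) (u' * A'₂₂ * u) :=
      conj_rep q u u' hu hu' hrep'
    rw [e00, e01, e10, e11] at hconj
    obtain ⟨hb0, hc0, ha, hd⟩ := glq_coeffs q hq0 hq1 hq2 hrep a b c d
      (by rw [hadef, hbdef, hcdef, hddef]; exact fun h => hdet (by linear_combination h)) hconj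
    rw [hb0, zero_smul, add_zero] at e00 e10
    rw [hc0, zero_smul, zero_add] at e01 e11
    refine ⟨u, u', a, d, hu, hu', ha, hd, ?_, ?_, ?_, ?_⟩
    · calc A'₁₁ = u * (u' * A'₁₁ * u) * u' := by
            rw [← mul_assoc, ← mul_assoc, hu, one_mul, mul_assoc, hu, mul_one]
        _ = a • (u * A₁₁ * u') := by
            rw [e00, mul_smul_comm, smul_mul_assoc]
    · calc A'₂₁ = u * (u' * A'₂₁ * u) * u' := by
            rw [← mul_assoc, ← mul_assoc, hu, one_mul, mul_assoc, hu, mul_one]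
        _ = a • (u * A₂₁ * u') := by
            rw [e10, mul_smul_comm, smul_mul_assoc]
    · calc A'₁₂ = u * (u' * A'₁₂ * u) * u' := by
            rw [← mul_assoc, ← mul_assoc, hu, one_mul, mul_assoc, hu, mul_one]
        _ = d • (u * A₁₂ * u') := by
            rw [e01, mul_smul_comm, smul_mul_assoc]
    · calc A'₂₂ = u * (u' * A'₂₂ * u) * u' := by
            rw [← mul_assoc, ← mul_assoc, hu, one_mul, mul_assoc, hu, mul_one]
        _ = d • (u * A₂₂ * u') := by
            rw [e11, mul_smul_comm, smul_mul_assoc]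
  · rintro ⟨u, u', α₁, α₂, hu, hu', hα₁, hα₂, e1, e2, e3, e4⟩
    refine ⟨u, u', hu, hu', ?_⟩
    set α : Fin 2 → ℂ := ![α₁, α₂] with hαdef
    have hα : ∀ k, α k ≠ 0 := by
      intro k
      fin_cases k
      · exact hα₁
      · exact hα₂
    have hM' : ∀ i k, M'b i k = α k • (u * Mb i k * u') := by
      intro i k
      fin_cases i <;> fin_cases k
      · exact e1
      · exact e3
      · exact e2
      · exact e4
    set N'' : T2 := Matrix.of (fun k j => (α k)⁻¹ • (u * N k j * u')) with hN''def
    have hN''e : ∀ k j, N'' k j = (α k)⁻¹ • (u * N k j * u') := fun k j => rfl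
    have term1 : ∀ i k j, M'b i k * N'' k j = u * (Mb i k * N k j) * u' := by
      intro i k j
      rw [hM', hN''e, smul_mul_assoc, mul_smul_comm, smul_smul,
        mul_inv_cancel₀ (hα k), one_smul]
      have h1 : u' * (u * (N k j * u')) = N k j * u' := by rw [← mul_assoc, hu', one_mul]
      simp only [mul_assoc, h1]
    have hM'N'' : M'b * N'' = 1 := by
      refine Matrix.ext fun i j => ?_
      rw [Matrix.mul_apply]
      calc ∑ k, M'b i k * N'' k j = ∑ k, u * (Mb i k * N k j) * u' := by
            exact Finset.sum_congr rfl fun k _ => term1 i k j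
        _ = u * ((Mb * N) i j) * u' := by
            rw [Matrix.mul_apply, Finset.mul_sum, Finset.sum_mul]
        _ = (1:T2) i j := by
            rw [hMN, Matrix.one_apply]
            split <;> simp [hu]
    have hN''M' : N'' * M'b = 1 := by
      refine Matrix.ext fun i j => ?_
      rw [Matrix.mul_apply]
      have term2 : ∀ k, N'' i k * M'b k j = ((α i)⁻¹ * α j) • (u * (N i k * Mb k j) * u') := by
        intro k
        rw [hM', hN''e, smul_mul_assoc, mul_smul_comm, smul_smul]
        congr 1
        have h1 : u' * (u * (Mb k j * u')) = Mb k j * u' := by rw [← mul_assoc, hu', one_mul]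
        simp only [mul_assoc, h1]
      calc ∑ k, N'' i k * M'b k j
          = ((α i)⁻¹ * α j) • (u * ((N * Mb) i j) * u') := by
            rw [Matrix.mul_apply, Finset.mul_sum, Finset.sum_mul, Finset.smul_sum]
            exact Finset.sum_congr rfl fun k _ => by rw [term2, mul_assoc]
        _ = (1:T2) i j := by
            rw [hNM, Matrix.one_apply]
            by_cases h : i = j
            · subst h; simp [hu, inv_mul_cancel₀ (hα i)]
            · simp [h]
    have hN' : N' = N'' := by
      calc N' = N' * (M'b * N'') := by rw [hM'N'', mul_one]
        _ = (N' * M'b) * N'' := by rw [mul_assoc]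
        _ = N'' := by rw [hNM', one_mul]
    intro i j w
    rw [hN']
    calc ∑ k, M'b i k * (u * w * u') * N'' k j
        = ∑ k, u * (Mb i k * w * N k j) * u' := by
          refine Finset.sum_congr rfl fun k _ => ?_
          rw [hM', hN''e, smul_mul_assoc, smul_mul_assoc, mul_smul_comm, smul_smul,
            mul_inv_cancel₀ (hα k), one_smul]
          have h0 : ∀ z : R4, u' * (u * z) = z := fun z => by
            rw [← mul_assoc, hu', one_mul]
          simp only [mul_assoc, h0]
      _ = u * (∑ k, Mb i k * w * N k j) * u' := by
          rw [Finset.mul_sum, Finset.sum_mul]
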